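/- Let C be a coalgebra over a commutative ring k and Σ a right C-comodule. Suppose there exist finitely many elements q₁,…,qₙ ∈ Q (where Q = { q : Σ → C* | Σ q(x₍₀₎)(c) x₍₁₎ = Σ c₍₁₎ q(x)(c₍₂₎) }) and x₁,…,xₙ ∈ Σ such that Σᵢ qᵢ(xᵢ) = ε in C*. Then C is a finitely generated projective k-module; explicitly, the families fⱼ ⊗ cⱼ := Σᵢ qᵢ((xᵢ)₍₀₎) ⊗ (xᵢ)₍₁₎ form a dual basis: Σⱼ fⱼ(c) cⱼ = c for all c ∈ C. -/
import Mathlib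


open TensorProduct

noncomputable section

/-- A right comodule structure on `M` over a `k`-coalgebra `C`. -/
structure RightComodule (k C M : Type*) [CommRing k] [AddCommGroup C] [Module k C]
    [Coalgebra k C] [AddCommGroup M] [Module k M] where
  ρ : M →ₗ[k] M ⊗[k] C
  coassoc : ∀ m : M,
    (TensorProduct.assoc k M C C) (ρ.rTensor C (ρ m)) =
      (Coalgebra.comul (R := k) (A := C)).lTensor M (ρ m)
  counit_comp : ∀ m : M,
    (TensorProduct.rid k M) ((Coalgebra.counit (R := k) (A := C)).lTensor M (ρ m)) = m

variable {k C M N : Type*} [CommRing k] [AddCommGroup C] [Module k C] [Coalgebra k C]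

/-- Convolution product on the dual of a coalgebra: `(conv f g) c = ∑ f c₍₁₎ * g c₍₂₎`. -/
def conv (f g : C →ₗ[k] k) : C →ₗ[k] k :=
  (TensorProduct.lid k k).toLinearMap ∘ₗ TensorProduct.map f g ∘ₗ Coalgebra.comul

/-- The right action of the dual of `C` on a right `C`-comodule: `x · f = ∑ x₍₀₎ * f x₍₁₎`. -/
def ract [AddCommGroup M] [Module k M] (σ : RightComodule k C M) (m : M)
    (f : C →ₗ[k] k) : M :=
  (TensorProduct.rid k M) (f.lTensor M (σ.ρ m))

/-- A map of right `C`-comodules. -/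
def IsColinear [AddCommGroup M] [Module k M] [AddCommGroup N] [Module k N]
    (σM : RightComodule k C M) (σN : RightComodule k C N) (φ : M →ₗ[k] N) : Prop :=
  φ.rTensor C ∘ₗ σM.ρ = σN.ρ ∘ₗ φ

/-- The `k`-module `Q` associated to a right `C`-comodule `M`:
maps `q : M → C*` with `∑ q x₍₀₎ c • x₍₁₎ = ∑ c₍₁₎ • q x c₍₂₎` for all `x, c`. -/
def QSet [AddCommGroup M] [Module k M] (σ : RightComodule k C M) :
    Set (M →ₗ[k] C →ₗ[k] k) :=
  { q | ∀ (x : M) (c : C),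
      (TensorProduct.lid k C) (((LinearMap.applyₗ c).comp q).rTensor C (σ.ρ x)) =
      (TensorProduct.rid k C) ((q x).lTensor C (Coalgebra.comul c)) }


theorem dualTensorHom_eq_lid_rTensor {k C : Type*} [CommRing k] [AddCommGroup C]
    [Module k C] (t : (C →ₗ[k] k) ⊗[k] C) (c : C) :
    dualTensorHom k C C t c =
      (TensorProduct.lid k C) ((LinearMap.applyₗ c).rTensor C t) := by
  induction t using TensorProduct.induction_on with
  | zero => simp
  | tmul f a => simp [dualTensorHom_apply]
  | add s t hs ht => simp [map_add, hs, ht]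

theorem stmt_3 {P : Type*} [AddCommGroup P] [Module k P] (σ : RightComodule k C P)
    (n : ℕ) (q : Fin n → (P →ₗ[k] C →ₗ[k] k)) (x : Fin n → P)
    (hq : ∀ i, q i ∈ QSet σ)
    (hsum : ∑ i, (q i) (x i) = (Coalgebra.counit (R := k) (A := C))) :
    -- `C` is a finitely generated projective `k`-module, with explicit dual basis
    -- `∑ⱼ fⱼ ⊗ cⱼ := ∑ᵢ qᵢ (xᵢ)₍₀₎ ⊗ (xᵢ)₍₁₎`
    Module.Finite k C ∧ Module.Projective k C ∧
    dualTensorHom k C C (∑ i, ((q i).rTensor C) (σ.ρ (x i))) = LinearMap.id := by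
  set T : (C →ₗ[k] k) ⊗[k] C := ∑ i, ((q i).rTensor C) (σ.ρ (x i)) with hT
  have hmain : dualTensorHom k C C T = LinearMap.id := by
    ext c
    rw [LinearMap.id_coe, id_eq, dualTensorHom_eq_lid_rTensor, hT, map_sum, map_sum]
    have step : ∀ i, (TensorProduct.lid k C)
        ((LinearMap.applyₗ c).rTensor C (((q i).rTensor C) (σ.ρ (x i)))) =
        (TensorProduct.rid k C) (((q i) (x i)).lTensor C (Coalgebra.comul c)) := by
      intro i
      rw [← LinearMap.rTensor_comp_apply]
      exact hq i (x i) c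
    rw [Finset.sum_congr rfl fun i _ => step i]
    have hl : (∑ i, ((q i) (x i)).lTensor C : C ⊗[k] C →ₗ[k] C ⊗[k] k)
        = ((∑ i, (q i) (x i)).lTensor C) := by
      simp only [← LinearMap.coe_lTensorHom, ← map_sum]
    calc ∑ i, (TensorProduct.rid k C) (((q i) (x i)).lTensor C (Coalgebra.comul c))
        = (TensorProduct.rid k C)
            ((∑ i, ((q i) (x i)).lTensor C : C ⊗[k] C →ₗ[k] C ⊗[k] k)
              (Coalgebra.comul c)) := by
          rw [LinearMap.sum_apply, map_sum]
      _ = c := by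
          rw [hl, hsum, Coalgebra.lTensor_counit_comul]
          simp
  obtain ⟨S, hS⟩ := TensorProduct.exists_finset T
  classical
  let ι : C →ₗ[k] (S → k) := LinearMap.pi fun p => (p : (C →ₗ[k] k) × C).1
  let π : (S → k) →ₗ[k] C :=
    ∑ p : S, (LinearMap.smulRight (LinearMap.proj p) (p : (C →ₗ[k] k) × C).2)
  have hsplit : π ∘ₗ ι = LinearMap.id := by
    ext c
    have : dualTensorHom k C C T c = c := by rw [hmain]; rfl
    rw [hS, map_sum] at this
    simp only [LinearMap.comp_apply, π, ι, LinearMap.sum_apply,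
      LinearMap.smulRight_apply, LinearMap.proj_apply, LinearMap.pi_apply,
      LinearMap.id_coe, id_eq]
    rw [Finset.sum_coe_sort S fun p => p.1 c • p.2]
    conv_rhs => rw [← this]
    simp [dualTensorHom_apply]
  have hsurj : Function.Surjective π := fun c =>
    ⟨ι c, by rw [← LinearMap.comp_apply, hsplit]; rfl⟩
  refine ⟨Module.Finite.of_surjective π hsurj,
    Module.Projective.of_split ι π hsplit, hmain⟩
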